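/- Let K be a difference subfield of U with σ(K) = K, and a a finite tuple with σ(a) ∈ K(a)^alg and μ(σ(a)/K(a)) = ld(a/K). Let m := sup_{ℓ≥1} μ(σ(a)/K(a,σ^ℓ(a))) (finite, since bounded by μ(σ(a)/K(a))), let ℓ0 be the least ℓ ≥ 1 at which this supremum is attained, and let C := μ((σ(a),…,σ^{ℓ0−1}(a))/K(a,σ^{ℓ0}(a))). Then for all ℓ, j ≥ ℓ0, C·μ(a/K(σ^{-j}(a),σ^ℓ(a))) = m^{ℓ0}. -/

import Mathlib

/- Setting: a large algebraically closed field `U` with an automorphism `σ`.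
   Tuples are maps `Fin n → U`; for a tuple `t`, the relevant set of coordinates
   is `Set.range t`.  `fAdj E s` is the subfield `E(s)` generated by a subfield
   `E` and a set `s`, and `deg E s` is the degree `μ(s/E) = [E(s):E]`. -/

set_option maxHeartbeats 1000000
set_option synthInstance.maxHeartbeats 1000000

open Filter Set

variable {U : Type*}

/-- The subfield `E(s)` generated by the subfield `E` and the set `s`. -/
noncomputable def fAdj [Field U] (E : Subfield U) (s : Set U) : Subfield U :=
  (IntermediateField.adjoin E s).toSubfield

/-- The degree `μ(s/E) = [E(s):E]` (as `Module.finrank`; it is `0` when infinite). -/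
noncomputable def deg [Field U] (E : Subfield U) (s : Set U) : ℕ :=
  Module.finrank E (IntermediateField.adjoin E s)

/-- `k ↦ μ(σ^{k+1}(s) / K(s, σ(s), …, σ^k(s)))`: the sequence whose eventual
value is the limit degree `ld(s/K)`. -/
noncomputable def ldSeq [Field U] (σ : U ≃+* U) (K : Subfield U) (s : Set U) (k : ℕ) : ℕ :=
  deg (fAdj K (⋃ i ∈ Set.Iic k, ⇑(σ ^ i) '' s)) (⇑(σ ^ (k + 1)) '' s)

/-- `k ↦ μ(σ^k(s) / K(s))`: the sequence whose `k`-th roots converge to the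
distant degree `dd(s/K)`. -/
noncomputable def ddSeq [Field U] (σ : U ≃+* U) (K : Subfield U) (s : Set U) (k : ℕ) : ℕ :=
  deg (fAdj K s) (⇑(σ ^ k) '' s)

/-- The inversive closure `K^inv = ⋃ₙ σ^{-n}(K)`. -/
noncomputable def Kinv [Field U] (σ : U ≃+* U) (K : Subfield U) : Subfield U :=
  ⨆ n : ℕ, K.map (σ⁻¹ ^ n : U ≃+* U).toRingHom

/-- The difference field `K(s)_σ = K(σ^i(s) : i ∈ ℕ)` generated by `s` over `K`. -/
noncomputable def diffAdj [Field U] (σ : U ≃+* U) (K : Subfield U) (s : Set U) : Subfield U :=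
  fAdj K (⋃ i : ℕ, ⇑(σ ^ i) '' s)

section calc1
variable [Field U] {E E' F : Subfield U} {s t : Set U} {x : U}

lemma range_algebraMap_subfield (E : Subfield U) : Set.range (algebraMap E U) = (E : Set U) :=
  Subtype.range_coe

lemma fAdj_eq_closure (E : Subfield U) (s : Set U) :
    fAdj E s = Subfield.closure (↑E ∪ s) := by
  rw [fAdj, IntermediateField.adjoin_toSubfield, range_algebraMap_subfield]

lemma le_fAdj : E ≤ fAdj E s := by
  rw [fAdj_eq_closure]
  exact fun y hy => Subfield.subset_closure (Or.inl hy)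

lemma subset_fAdj (E : Subfield U) (s : Set U) : s ⊆ ↑(fAdj E s) := by
  rw [fAdj_eq_closure]
  exact fun y hy => Subfield.subset_closure (Or.inr hy)

lemma fAdj_le (hE : E ≤ F) (hs : s ⊆ ↑F) : fAdj E s ≤ F := by
  rw [fAdj_eq_closure]
  exact Subfield.closure_le.mpr (Set.union_subset hE hs)

lemma fAdj_mono (hE : E ≤ E') (hs : s ⊆ t) : fAdj E s ≤ fAdj E' t :=
  fAdj_le (hE.trans le_fAdj) (hs.trans (subset_fAdj E' t))

lemma fAdj_fAdj (E : Subfield U) (s t : Set U) :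
    fAdj (fAdj E t) s = fAdj E (s ∪ t) := by
  refine le_antisymm (fAdj_le (fAdj_mono le_rfl le_sup_right) ?_) (fAdj_le ?_ ?_)
  · exact (Set.subset_union_left).trans (subset_fAdj E (s ∪ t))
  · exact le_fAdj.trans (fAdj_mono le_fAdj le_rfl)
  · exact Set.union_subset ((subset_fAdj _ s)) ((subset_fAdj E t).trans
      (SetLike.coe_subset_coe.mpr le_fAdj))

lemma fAdj_map (f : U →+* U) (E : Subfield U) (s : Set U) :
    (fAdj E s).map f = fAdj (E.map f) (f '' s) := by
  rw [fAdj_eq_closure, fAdj_eq_closure, RingHom.map_field_closure, Set.image_union,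
    Subfield.coe_map]

lemma deg_eq_relfinrank (E : Subfield U) (s : Set U) :
    deg E s = Subfield.relfinrank E (fAdj E s) := by
  rw [Subfield.relfinrank_eq_finrank_of_le le_fAdj, deg]
  congr 1

end calc1

section calc2
variable [Field U] {E E' F : Subfield U} {s t : Set U} {x : U}

lemma deg_congr (h : fAdj E s = fAdj E t) : deg E s = deg E t := by
  rw [deg_eq_relfinrank, deg_eq_relfinrank, h]

lemma deg_tower (E : Subfield U) (s t : Set U) :
    deg E (s ∪ t) = deg (fAdj E t) s * deg E t := by
  rw [deg_eq_relfinrank E (s ∪ t), deg_eq_relfinrank E t, deg_eq_relfinrank (fAdj E t) s,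
    fAdj_fAdj, mul_comm]
  exact (Subfield.relfinrank_mul_relfinrank (le_fAdj : E ≤ fAdj E t)
    (fAdj_mono le_rfl Set.subset_union_right)).symm

lemma deg_map (f : U →+* U) (E : Subfield U) (s : Set U) :
    deg (E.map f) (⇑f '' s) = deg E s := by
  rw [deg_eq_relfinrank, deg_eq_relfinrank, ← fAdj_map]
  exact Subfield.relfinrank_map_map E (fAdj E s) f

lemma deg_of_subset (h : s ⊆ ↑E) : deg E s = 1 := by
  have : IntermediateField.adjoin E s = ⊥ := by
    rw [eq_bot_iff]
    refine IntermediateField.adjoin_le_iff.mpr ?_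
    intro y hy
    rw [SetLike.mem_coe, IntermediateField.mem_bot]
    exact ⟨⟨y, h hy⟩, rfl⟩
  rw [deg, this, IntermediateField.finrank_bot]

lemma isIntegral_of_le (h : E ≤ E') (hx : IsIntegral E x) : IsIntegral E' x := by
  obtain ⟨p, hp, he⟩ := hx
  refine ⟨p.map (Subfield.inclusion h), hp.map _, ?_⟩
  rw [Polynomial.eval₂_map]
  have : (algebraMap E' U).comp (Subfield.inclusion h) = algebraMap E U := by
    ext y; rfl
  rw [this]
  exact he

lemma isIntegral_of_mem (hx : x ∈ E) : IsIntegral E x := by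
  have : algebraMap E U ⟨x, hx⟩ = x := rfl
  exact this ▸ isIntegral_algebraMap

end calc2

section calc3
variable [Field U] {E E' F : Subfield U} {s t : Set U} {x : U}

lemma deg_singleton (hx : IsIntegral E x) :
    deg E {x} = (minpoly E x).natDegree := by
  rw [deg]
  exact IntermediateField.adjoin.finrank hx

lemma deg_singleton_le (h : E ≤ E') (hx : IsIntegral E x) :
    deg E' {x} ≤ deg E {x} := by
  have hx' : IsIntegral E' x := isIntegral_of_le h hx
  rw [deg_singleton hx, deg_singleton hx']
  have hne : (minpoly E x).map (Subfield.inclusion h) ≠ 0 :=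
    ((minpoly.monic hx).map _).ne_zero
  have hdvd : minpoly E' x ∣ (minpoly E x).map (Subfield.inclusion h) := by
    apply minpoly.dvd
    rw [Polynomial.aeval_def, Polynomial.eval₂_map]
    have : (algebraMap E' U).comp (Subfield.inclusion h) = algebraMap E U := by
      ext y; rfl
    rw [this, ← Polynomial.aeval_def]
    exact minpoly.aeval E x
  calc (minpoly E' x).natDegree ≤ ((minpoly E x).map (Subfield.inclusion h)).natDegree :=
        Polynomial.natDegree_le_of_dvd hdvd hne
    _ = (minpoly E x).natDegree := Polynomial.natDegree_map _

lemma deg_singleton_pos (hx : IsIntegral E x) : 0 < deg E {x} := by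
  rw [deg]
  have : FiniteDimensional E (IntermediateField.adjoin E ({x} : Set U)) :=
    IntermediateField.adjoin.finiteDimensional hx
  exact Module.finrank_pos

lemma deg_empty (E : Subfield U) : deg E (∅ : Set U) = 1 :=
  deg_of_subset (Set.empty_subset _)

lemma deg_pos (hs : s.Finite) (hi : ∀ y ∈ s, IsIntegral E y) : 0 < deg E s := by
  revert hi
  refine Set.Finite.induction_on (motive := fun s _ =>
    (∀ y ∈ s, IsIntegral E y) → 0 < deg E s) s hs ?_ ?_
  · intro _; rw [deg_empty]; exact one_pos
  · intro z s' hzs hs' ih hi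
    rw [show insert z s' = {z} ∪ s' from rfl, deg_tower]
    have h1 : 0 < deg (fAdj E s') {z} :=
      deg_singleton_pos (isIntegral_of_le le_fAdj (hi z (Set.mem_insert z s')))
    have h2 : 0 < deg E s' := ih fun y hy => hi y (Set.mem_insert_of_mem _ hy)
    exact Nat.mul_pos h1 h2

lemma deg_mono (h : E ≤ E') (hs : s.Finite) (hi : ∀ y ∈ s, IsIntegral E y) :
    deg E' s ≤ deg E s := by
  revert hi
  refine Set.Finite.induction_on (motive := fun s _ =>
    (∀ y ∈ s, IsIntegral E y) → deg E' s ≤ deg E s) s hs ?_ ?_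
  · intro _; rw [deg_empty, deg_empty]
  · intro z s' hzs hs' ih hi
    rw [show insert z s' = {z} ∪ s' from rfl, deg_tower, deg_tower]
    have h1 : deg (fAdj E' s') {z} ≤ deg (fAdj E s') {z} :=
      deg_singleton_le (fAdj_mono h le_rfl)
        (isIntegral_of_le le_fAdj (hi z (Set.mem_insert z s')))
    exact Nat.mul_le_mul h1 (ih fun y hy => hi y (Set.mem_insert_of_mem _ hy))

lemma isIntegral_of_mem_fAdj (hpos : 0 < deg E s) (hx : x ∈ fAdj E s) :
    IsIntegral E x := by
  have hfd : FiniteDimensional E (IntermediateField.adjoin E s) := by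
    rw [deg] at hpos
    exact Module.finite_of_finrank_pos hpos
  have hx' : x ∈ IntermediateField.adjoin E s := hx
  have : IsIntegral E (⟨x, hx'⟩ : IntermediateField.adjoin E s) :=
    IsIntegral.of_finite E _
  have := this.map (IntermediateField.adjoin E s).val
  exact this

end calc3

section main
variable [Field U] (σ : U ≃+* U) {K : Subfield U} {n : ℕ} (a : Fin n → U)

/-- `b σ a i = σ^i(a)` as a set. -/
def bS (i : ℕ) : Set U := ⇑(σ ^ i) '' Set.range a

/-- union of `σ^i(a)` for `i ∈ I`. -/
def BuS (I : Set ℕ) : Set U := ⋃ i ∈ I, bS σ a i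

lemma bS_zero : bS σ a 0 = Set.range a := by
  rw [bS, pow_zero, show ⇑(1 : U ≃+* U) = id from rfl, Set.image_id]

lemma bS_finite (i : ℕ) : (bS σ a i).Finite := (Set.finite_range a).image _

lemma BuS_finite {I : Set ℕ} (hI : I.Finite) : (BuS σ a I).Finite :=
  Set.Finite.biUnion hI fun i _ => bS_finite σ a i

lemma bS_image (k i : ℕ) : ⇑(σ ^ k) '' bS σ a i = bS σ a (k + i) := by
  rw [bS, bS, ← Set.image_comp]
  congr 1
  ext x
  rw [pow_add]
  rfl

lemma BuS_image (k : ℕ) (I : Set ℕ) :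
    ⇑(σ ^ k) '' BuS σ a I = BuS σ a ((k + ·) '' I) := by
  rw [BuS, BuS]
  rw [Set.image_iUnion₂]
  simp only [bS_image, Set.biUnion_image]

variable {σ a}

lemma Kpow_map (hK : K.map σ.toRingHom = K) (k : ℕ) :
    K.map ((σ ^ k : U ≃+* U) : U →+* U) = K := by
  induction k with
  | zero =>
      have : ((σ ^ 0 : U ≃+* U) : U →+* U) = RingHom.id U := by
        ext x; rfl
      rw [this]
      exact SetLike.coe_injective (Set.image_id _)
  | succ k ih =>
      have hcomp : ((σ ^ (k+1) : U ≃+* U) : U →+* U) =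
          (σ : U →+* U).comp ((σ ^ k : U ≃+* U) : U →+* U) := by
        ext x
        show (σ ^ (k+1)) x = σ ((σ ^ k) x)
        rw [pow_succ']
        rfl
      rw [hcomp, ← Subfield.map_map, ih]
      exact hK

/-- shifting every index by `k` preserves the degree. -/
lemma deg_shiftS (hK : K.map σ.toRingHom = K) (k : ℕ) (I J : Set ℕ) :
    deg (fAdj K (BuS σ a I)) (BuS σ a J) =
      deg (fAdj K (BuS σ a ((k + ·) '' I))) (BuS σ a ((k + ·) '' J)) := by
  rw [← deg_map ((σ ^ k : U ≃+* U) : U →+* U) (fAdj K (BuS σ a I)) (BuS σ a J),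
    fAdj_map, Kpow_map hK k]
  have h1 : ⇑((σ ^ k : U ≃+* U) : U →+* U) '' BuS σ a I = BuS σ a ((k + ·) '' I) := by
    rw [show ⇑((σ ^ k : U ≃+* U) : U →+* U) = ⇑(σ ^ k) from rfl, BuS_image]
  have h2 : ⇑((σ ^ k : U ≃+* U) : U →+* U) '' BuS σ a J = BuS σ a ((k + ·) '' J) := by
    rw [show ⇑((σ ^ k : U ≃+* U) : U →+* U) = ⇑(σ ^ k) from rfl, BuS_image]
  rw [h1, h2]

end main

section main2
variable [Field U] {σ : U ≃+* U} {K : Subfield U} {n : ℕ} {a : Fin n → U}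

lemma isIntegral_map_equiv (f : U ≃+* U) {E : Subfield U} {x : U} (hx : IsIntegral E x) :
    IsIntegral (E.map (f : U →+* U)) (f x) := by
  obtain ⟨p, hm, he⟩ := hx
  let g : ↥E →+* ↥(E.map (f : U →+* U)) :=
    RingHom.codRestrict ((f : U →+* U).comp (algebraMap E U)) (E.map (f : U →+* U))
      (fun y => ⟨y, y.2, rfl⟩)
  refine ⟨p.map g, hm.map g, ?_⟩
  rw [Polynomial.eval₂_map]
  rw [show (algebraMap ↥(E.map (f : U →+* U)) U).comp g
      = (f : U →+* U).comp (algebraMap E U) from rfl]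
  show Polynomial.eval₂ ((f : U →+* U).comp (algebraMap E U)) ((f : U →+* U) x) p = 0
  rw [← Polynomial.hom_eval₂, he, map_zero]

lemma isIntegral_trans' {E : Subfield U} {u : Set U} {x : U} (hu : u.Finite)
    (hui : ∀ y ∈ u, IsIntegral E y) (hx : IsIntegral (fAdj E u) x) : IsIntegral E x := by
  have h1 : 0 < deg E ({x} ∪ u) := by
    rw [deg_tower]
    exact Nat.mul_pos (deg_singleton_pos hx) (deg_pos hu hui)
  exact isIntegral_of_mem_fAdj h1 (subset_fAdj _ _ (Set.mem_union_left _ rfl))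

variable (hK : K.map σ.toRingHom = K)
  (h1int : ∀ x ∈ bS σ a 1, IsIntegral (fAdj K (bS σ a 0)) x)
include hK h1int

lemma bS_int_succ (i : ℕ) : ∀ x ∈ bS σ a (i + 1), IsIntegral (fAdj K (bS σ a i)) x := by
  intro x hx
  rw [show i + 1 = i + 1 from rfl, ← bS_image σ a i 1] at hx
  obtain ⟨y, hy, rfl⟩ := hx
  have h2 : IsIntegral ((fAdj K (bS σ a 0)).map ((σ ^ i : U ≃+* U) : U →+* U)) ((σ ^ i) y) :=
    isIntegral_map_equiv (σ ^ i) (h1int y hy)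
  rwa [fAdj_map, Kpow_map hK, show ⇑((σ ^ i : U ≃+* U) : U →+* U) = ⇑(σ ^ i) from rfl,
    bS_image, Nat.add_zero] at h2

lemma bS_int {i j : ℕ} (h : j ≤ i) : ∀ x ∈ bS σ a i, IsIntegral (fAdj K (bS σ a j)) x := by
  induction i, h using Nat.le_induction with
  | base => exact fun x hx => isIntegral_of_mem (subset_fAdj _ _ hx)
  | succ i hji ih =>
      intro x hx
      have hstep : IsIntegral (fAdj K (bS σ a i)) x := bS_int_succ hK h1int i x hx
      have hle : fAdj K (bS σ a i) ≤ fAdj (fAdj K (bS σ a j)) (bS σ a i) :=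
        fAdj_mono le_fAdj le_rfl
      exact isIntegral_trans' (bS_finite σ a i) ih (isIntegral_of_le hle hstep)

lemma BuS_int {j : ℕ} {J : Set ℕ} (hJ : ∀ i ∈ J, j ≤ i) :
    ∀ x ∈ BuS σ a J, IsIntegral (fAdj K (bS σ a j)) x := by
  intro x hx
  obtain ⟨i, hi, hxi⟩ := Set.mem_iUnion₂.mp hx
  exact bS_int hK h1int (hJ i hi) x hxi

lemma int_over {j : ℕ} {I J : Set ℕ} (hjI : j ∈ I) (hJ : ∀ i ∈ J, j ≤ i) :
    ∀ x ∈ BuS σ a J, IsIntegral (fAdj K (BuS σ a I)) x := by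
  intro x hx
  have hsub : bS σ a j ⊆ BuS σ a I := Set.subset_biUnion_of_mem hjI
  exact isIntegral_of_le (fAdj_mono le_rfl hsub) (BuS_int hK h1int hJ x hx)

lemma Dg_pos {j : ℕ} {I J : Set ℕ} (hjI : j ∈ I) (hJ : ∀ i ∈ J, j ≤ i) (hJf : J.Finite) :
    0 < deg (fAdj K (BuS σ a I)) (BuS σ a J) :=
  deg_pos (BuS_finite σ a hJf) (int_over hK h1int hjI hJ)

lemma Dg_mono {I I' J : Set ℕ} {j : ℕ} (hII : I ⊆ I') (hjI : j ∈ I) (hJ : ∀ i ∈ J, j ≤ i)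
    (hJf : J.Finite) :
    deg (fAdj K (BuS σ a I')) (BuS σ a J) ≤ deg (fAdj K (BuS σ a I)) (BuS σ a J) :=
  deg_mono (fAdj_mono le_rfl (Set.biUnion_subset_biUnion_left hII)) (BuS_finite σ a hJf)
    (int_over hK h1int hjI hJ)

end main2

section main3
variable [Field U] (σ : U ≃+* U) (K : Subfield U) {n : ℕ} (a : Fin n → U)

/-- `DgS σ K a I J = [K(σ^I(a), σ^J(a)) : K(σ^I(a))]`. -/
noncomputable def DgS (I J : Set ℕ) : ℕ := deg (fAdj K (BuS σ a I)) (BuS σ a J)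

variable {σ K a}

lemma BuS_union (I J : Set ℕ) : BuS σ a (I ∪ J) = BuS σ a I ∪ BuS σ a J :=
  Set.biUnion_union I J _

lemma DgS_tower {I X Y I' : Set ℕ} (hI' : Y ∪ I = I') :
    DgS σ K a I (X ∪ Y) = DgS σ K a I' X * DgS σ K a I Y := by
  rw [DgS, DgS, DgS, BuS_union, deg_tower, fAdj_fAdj, ← BuS_union, hI']

lemma DgS_shift (hK : K.map σ.toRingHom = K) (k : ℕ) (I J I' J' : Set ℕ)
    (hI : (k + ·) '' I = I') (hJ : (k + ·) '' J = J') :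
    DgS σ K a I J = DgS σ K a I' J' := by
  rw [DgS, DgS, deg_shiftS hK k, hI, hJ]

lemma DgS_congr {I J I' J' : Set ℕ} (hI : I = I') (hJ : J = J') :
    DgS σ K a I J = DgS σ K a I' J' := by rw [hI, hJ]

variable (hK : K.map σ.toRingHom = K)
  (h1int : ∀ x ∈ bS σ a 1, IsIntegral (fAdj K (bS σ a 0)) x)
include hK h1int

lemma DgS_pos {j : ℕ} {I J : Set ℕ} (hjI : j ∈ I) (hJ : ∀ i ∈ J, j ≤ i) (hJf : J.Finite) :
    0 < DgS σ K a I J :=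
  Dg_pos hK h1int hjI hJ hJf

lemma DgS_mono {I I' J : Set ℕ} {j : ℕ} (hII : I ⊆ I') (hjI : j ∈ I) (hJ : ∀ i ∈ J, j ≤ i)
    (hJf : J.Finite) : DgS σ K a I' J ≤ DgS σ K a I J :=
  Dg_mono hK h1int hII hjI hJ hJf

end main3

section main4
variable [Field U] {σ : U ≃+* U} {K : Subfield U} {n : ℕ} {a : Fin n → U} {La : ℕ}

lemma DgS_empty (I : Set ℕ) : DgS σ K a I (∅ : Set ℕ) = 1 := by
  rw [DgS, show BuS σ a (∅ : Set ℕ) = ∅ by simp [BuS], deg_empty]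

lemma image_addl_Icc (k p q : ℕ) : (k + ·) '' Set.Icc p q = Set.Icc (k+p) (k+q) := by
  ext i
  simp only [Set.mem_image, Set.mem_Icc]
  constructor
  · rintro ⟨x, hx, rfl⟩; omega
  · intro h; exact ⟨i - k, by omega, by omega⟩

lemma image_addl_Iic (k q : ℕ) : (k + ·) '' Set.Iic q = Set.Icc k (k+q) := by
  ext i
  simp only [Set.mem_image, Set.mem_Iic, Set.mem_Icc]
  constructor
  · rintro ⟨x, hx, rfl⟩; omega
  · intro h; exact ⟨i - k, by omega, by omega⟩

lemma image_addl_singleton (k x : ℕ) : (k + ·) '' ({x} : Set ℕ) = {k+x} :=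
  Set.image_singleton

lemma image_addl_pair (k x y : ℕ) : (k + ·) '' ({x, y} : Set ℕ) = {k+x, k+y} :=
  Set.image_pair _ _ _

variable (hK : K.map σ.toRingHom = K)
  (h1int : ∀ x ∈ bS σ a 1, IsIntegral (fAdj K (bS σ a 0)) x)
include hK h1int

lemma ld_const (hmu0 : DgS σ K a {0} {1} = La)
    (hev : ∀ k, ∃ N, k ≤ N ∧ DgS σ K a (Set.Iic N) {N + 1} = La) :
    ∀ k, DgS σ K a (Set.Iic k) {k + 1} = La := by
  have h0 : DgS σ K a (Set.Iic 0) {0 + 1} = La := by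
    rw [DgS_congr (show Set.Iic 0 = ({0} : Set ℕ) by ext i; simp [Nat.le_zero]) rfl]
    exact hmu0
  have hanti : ∀ k, DgS σ K a (Set.Iic (k+1)) {k+1+1} ≤ DgS σ K a (Set.Iic k) {k+1} := by
    intro k
    have hm : DgS σ K a (Set.Iic (k+1)) {k+1+1} ≤ DgS σ K a (Set.Icc 1 (k+1)) {k+1+1} :=
      DgS_mono (j := 1) hK h1int
        (by intro i hi; simp only [Set.mem_Icc] at hi; simp only [Set.mem_Iic]; omega)
        (by simp only [Set.mem_Icc]; omega) (by intro i hi; simp only [Set.mem_singleton_iff] at hi; omega)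
        (Set.finite_singleton _)
    have hs : DgS σ K a (Set.Iic k) {k+1} = DgS σ K a (Set.Icc 1 (k+1)) {k+1+1} :=
      DgS_shift hK 1 _ _ _ _
        (by rw [image_addl_Iic, Nat.add_comm 1 k])
        (by rw [image_addl_singleton, Nat.add_comm 1 (k+1)])
    rw [hs]
    exact hm
  have hA : Antitone (fun k => DgS σ K a (Set.Iic k) {k + 1}) :=
    antitone_nat_of_succ_le hanti
  intro k
  refine le_antisymm ?_ ?_
  · exact h0 ▸ hA (Nat.zero_le k)
  · obtain ⟨N, hkN, hN⟩ := hev k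
    exact hN ▸ hA hkN

lemma gen_L (hld : ∀ k, DgS σ K a (Set.Iic k) {k + 1} = La) :
    ∀ k (I : Set ℕ), k ∈ I → I ⊆ Set.Iic k → DgS σ K a I {k + 1} = La := by
  intro k I hkI hI
  have h01 : DgS σ K a {0} {1} = La := by
    have := hld 0
    rwa [DgS_congr (show Set.Iic 0 = ({0} : Set ℕ) by ext i; simp [Nat.le_zero]) rfl] at this
  refine le_antisymm ?_ ?_
  · have hm : DgS σ K a I {k+1} ≤ DgS σ K a {k} {k+1} :=
      DgS_mono (j := k) hK h1int (Set.singleton_subset_iff.mpr hkI) rfl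
        (by intro i hi; simp only [Set.mem_singleton_iff] at hi; omega) (Set.finite_singleton _)
    have hs : DgS σ K a ({k} : Set ℕ) {k+1} = La := by
      rw [← DgS_shift hK k {0} {1} {k} {k+1} (by rw [image_addl_singleton, Nat.add_zero])
        (by rw [image_addl_singleton])]
      exact h01
    exact hs ▸ hm
  · have hm : DgS σ K a (Set.Iic k) {k+1} ≤ DgS σ K a I {k+1} :=
      DgS_mono (j := k) hK h1int hI hkI
        (by intro i hi; simp only [Set.mem_singleton_iff] at hi; omega) (Set.finite_singleton _)
    exact (hld k) ▸ hm

lemma block_L (hld : ∀ k, DgS σ K a (Set.Iic k) {k + 1} = La) :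
    ∀ (r k : ℕ) (I : Set ℕ), k ∈ I → I ⊆ Set.Iic k →
      DgS σ K a I (Set.Icc (k+1) (k+r)) = La ^ r := by
  intro r
  induction r with
  | zero =>
      intro k I hkI hI
      rw [DgS_congr rfl (show Set.Icc (k+1) (k+0) = (∅ : Set ℕ) by
          ext i; simp only [Set.mem_Icc, Set.mem_empty_iff_false, iff_false]; omega),
        DgS_empty, pow_zero]
  | succ r ih =>
      intro k I hkI hI
      rw [DgS_congr rfl (show Set.Icc (k+1) (k+(r+1)) = {k+r+1} ∪ Set.Icc (k+1) (k+r) by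
        ext i; simp only [Set.mem_Icc, Set.mem_union, Set.mem_singleton_iff]; omega)]
      rw [DgS_tower rfl]
      rw [ih k I hkI hI]
      have hgen : DgS σ K a (Set.Icc (k+1) (k+r) ∪ I) {(k+r)+1} = La := by
        refine gen_L hK h1int hld (k+r) _ ?_ ?_
        · rcases Nat.eq_zero_or_pos r with hr | hr
          · subst hr; exact Or.inr hkI
          · exact Or.inl (by simp only [Set.mem_Icc]; omega)
        · intro i hi
          rcases hi with hi | hi
          · simp only [Set.mem_Icc] at hi; simp [Set.mem_Iic]; omega
          · have := hI hi; simp only [Set.mem_Iic] at this ⊢; omega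
      rw [hgen, pow_succ, mul_comm]

lemma P_formula (hld : ∀ k, DgS σ K a (Set.Iic k) {k + 1} = La) :
    ∀ k, 1 ≤ k → DgS σ K a {0, k} (Set.Icc 1 (k-1)) * DgS σ K a {0} {k} = La ^ k := by
  intro k hk
  have h0 : DgS σ K a {0} (Set.Icc 1 k) = La ^ k := by
    have := block_L hK h1int hld k 0 {0} rfl
      (by intro i hi; simp only [Set.mem_singleton_iff] at hi; simp [hi])
    rwa [DgS_congr rfl (show Set.Icc (0+1) (0+k) = Set.Icc 1 k by norm_num)] at this
  rw [DgS_congr rfl (show Set.Icc 1 k = Set.Icc 1 (k-1) ∪ {k} by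
    ext i; simp only [Set.mem_Icc, Set.mem_union, Set.mem_singleton_iff]; omega)] at h0
  rw [DgS_tower (show ({k} : Set ℕ) ∪ {0} = {0, k} by
    ext i; simp only [Set.mem_union, Set.mem_singleton_iff, Set.mem_insert_iff]; omega)] at h0
  exact h0

end main4

section main5
variable [Field U] {σ : U ≃+* U} {K : Subfield U} {n : ℕ} {a : Fin n → U} {La m : ℕ}

variable (hK : K.map σ.toRingHom = K)
  (h1int : ∀ x ∈ bS σ a 1, IsIntegral (fAdj K (bS σ a 0)) x)
include hK h1int

lemma La_eq (hld : ∀ k, DgS σ K a (Set.Iic k) {k + 1} = La) : DgS σ K a {0} {1} = La := by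
  have := hld 0
  rwa [DgS_congr (show Set.Iic 0 = ({0} : Set ℕ) by ext i; simp [Nat.le_zero]) rfl] at this

lemma La_pos (hld : ∀ k, DgS σ K a (Set.Iic k) {k + 1} = La) : 0 < La := by
  rw [← La_eq hK h1int hld]
  exact DgS_pos (j := 0) hK h1int rfl
    (by intro i hi; simp only [Set.mem_singleton_iff] at hi; omega) (Set.finite_singleton _)

lemma d_step (hld : ∀ k, DgS σ K a (Set.Iic k) {k + 1} = La) (k : ℕ) (hk : 1 ≤ k) :
    DgS σ K a {0, k} {1} ≤ DgS σ K a {0, k+1} {1} := by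
  have hx1 : DgS σ K a {0, k} {k+1} = La := by
    refine gen_L hK h1int hld k {0, k} (Or.inr rfl) ?_
    intro i hi
    simp only [Set.mem_insert_iff, Set.mem_singleton_iff] at hi
    simp only [Set.mem_Iic]
    omega
  have hx2 : DgS σ K a {0, 1, k} {k+1} = La := by
    refine gen_L hK h1int hld k {0, 1, k} (Or.inr (Or.inr rfl)) ?_
    intro i hi
    simp only [Set.mem_insert_iff, Set.mem_singleton_iff] at hi
    simp only [Set.mem_Iic]
    omega
  have e1 : DgS σ K a {0, k} (({1} : Set ℕ) ∪ {k+1}) =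
      DgS σ K a {0, k, k+1} {1} * DgS σ K a {0, k} {k+1} :=
    DgS_tower (by ext i; simp only [Set.mem_union, Set.mem_singleton_iff,
      Set.mem_insert_iff]; omega)
  have e2 : DgS σ K a {0, k} (({k+1} : Set ℕ) ∪ {1}) =
      DgS σ K a {0, 1, k} {k+1} * DgS σ K a {0, k} {1} :=
    DgS_tower (by ext i; simp only [Set.mem_union, Set.mem_singleton_iff,
      Set.mem_insert_iff]; omega)
  rw [Set.union_comm] at e1
  rw [e1, hx1, hx2] at e2
  have hcancel : DgS σ K a {0, k, k+1} {1} = DgS σ K a {0, k} {1} := by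
    have hLa : 0 < La := La_pos hK h1int hld
    have : DgS σ K a {0, k, k+1} {1} * La = DgS σ K a {0, k} {1} * La := by
      rw [e2]; ring
    exact Nat.eq_of_mul_eq_mul_right hLa this
  rw [← hcancel]
  exact DgS_mono (j := 0) hK h1int
    (by intro i hi; rcases hi with hi | hi <;>
      simp only [Set.mem_singleton_iff, Set.mem_insert_iff] at hi ⊢ <;> omega)
    (Or.inl rfl)
    (by intro i hi; simp only [Set.mem_singleton_iff] at hi; omega) (Set.finite_singleton _)

lemma d_eq_m (hld : ∀ k, DgS σ K a (Set.Iic k) {k + 1} = La)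
    (hdub : ∀ k, 1 ≤ k → DgS σ K a {0, k} {1} ≤ m) {ℓ0 : ℕ} (hℓ0 : 1 ≤ ℓ0)
    (hd0 : DgS σ K a {0, ℓ0} {1} = m) :
    ∀ ℓ, ℓ0 ≤ ℓ → DgS σ K a {0, ℓ} {1} = m := by
  intro ℓ hℓ
  induction ℓ, hℓ using Nat.le_induction with
  | base => exact hd0
  | succ ℓ hℓ ih =>
      refine le_antisymm (hdub (ℓ+1) (by omega)) ?_
      rw [← ih]
      exact d_step hK h1int hld ℓ (by omega)

lemma T_identity (hld : ∀ k, DgS σ K a (Set.Iic k) {k + 1} = La) (j ℓ : ℕ)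
    (hj : 1 ≤ j) (hℓ : 1 ≤ ℓ) :
    DgS σ K a {0, j+ℓ} {j} * DgS σ K a {0} {j+ℓ} =
      DgS σ K a {0} {j} * DgS σ K a {0} {ℓ} := by
  -- upper bound
  have hW1 : DgS σ K a {0} (({j} : Set ℕ) ∪ {j+ℓ}) =
      DgS σ K a {0, j+ℓ} {j} * DgS σ K a {0} {j+ℓ} :=
    DgS_tower (by ext i; simp only [Set.mem_union, Set.mem_singleton_iff,
      Set.mem_insert_iff]; omega)
  have hW2 : DgS σ K a {0} (({j+ℓ} : Set ℕ) ∪ {j}) =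
      DgS σ K a {0, j} {j+ℓ} * DgS σ K a {0} {j} :=
    DgS_tower (by ext i; simp only [Set.mem_union, Set.mem_singleton_iff,
      Set.mem_insert_iff]; omega)
  rw [Set.union_comm] at hW1
  have hG : DgS σ K a {0, j} {j+ℓ} ≤ DgS σ K a {0} {ℓ} := by
    have h1 : DgS σ K a {0, j} {j+ℓ} ≤ DgS σ K a {j} {j+ℓ} :=
      DgS_mono (j := j) hK h1int
        (by intro i hi; simp only [Set.mem_singleton_iff] at hi; exact Or.inr hi) rfl
        (by intro i hi; simp only [Set.mem_singleton_iff] at hi; omega)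
        (Set.finite_singleton _)
    have h2 : DgS σ K a ({j} : Set ℕ) {j+ℓ} = DgS σ K a {0} {ℓ} := by
      rw [← DgS_shift hK j {0} {ℓ} {j} {j+ℓ} (by rw [image_addl_singleton, Nat.add_zero])
        (by rw [image_addl_singleton])]
    exact h2 ▸ h1
  have hupper : DgS σ K a {0, j+ℓ} {j} * DgS σ K a {0} {j+ℓ} ≤
      DgS σ K a {0} {j} * DgS σ K a {0} {ℓ} := by
    rw [← hW1, hW2, mul_comm]
    exact Nat.mul_le_mul_left _ hG
  -- lower bound via the P-decomposition
  have hsplit : Set.Icc 1 (j+ℓ-1) =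
      ((Set.Icc 1 (j-1) ∪ Set.Icc (j+1) (j+ℓ-1)) ∪ {j} : Set ℕ) := by
    ext i; simp only [Set.mem_Icc, Set.mem_union, Set.mem_singleton_iff]; omega
  have ht1 : DgS σ K a {0, j+ℓ} ((Set.Icc 1 (j-1) ∪ Set.Icc (j+1) (j+ℓ-1)) ∪ {j}) =
      DgS σ K a {0, j, j+ℓ} (Set.Icc 1 (j-1) ∪ Set.Icc (j+1) (j+ℓ-1)) *
        DgS σ K a {0, j+ℓ} {j} :=
    DgS_tower (by ext i; simp only [Set.mem_union, Set.mem_singleton_iff,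
      Set.mem_insert_iff]; omega)
  have ht2 : DgS σ K a {0, j, j+ℓ} (Set.Icc 1 (j-1) ∪ Set.Icc (j+1) (j+ℓ-1)) =
      DgS σ K a ({0} ∪ Set.Icc j (j+ℓ)) (Set.Icc 1 (j-1)) *
        DgS σ K a {0, j, j+ℓ} (Set.Icc (j+1) (j+ℓ-1)) :=
    DgS_tower (by ext i; simp only [Set.mem_union, Set.mem_singleton_iff,
      Set.mem_insert_iff, Set.mem_Icc]; omega)
  have hR : DgS σ K a ({0} ∪ Set.Icc j (j+ℓ)) (Set.Icc 1 (j-1)) ≤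
      DgS σ K a {0, j} (Set.Icc 1 (j-1)) :=
    DgS_mono (j := 0) hK h1int
      (by intro i hi; rcases hi with hi | hi <;>
        simp only [Set.mem_singleton_iff, Set.mem_union, Set.mem_Icc] at hi ⊢ <;> omega)
      (Or.inl rfl) (by intro i _; omega) (Set.finite_Icc _ _)
  have hQ : DgS σ K a {0, j, j+ℓ} (Set.Icc (j+1) (j+ℓ-1)) ≤
      DgS σ K a {0, ℓ} (Set.Icc 1 (ℓ-1)) := by
    have h1 : DgS σ K a {0, j, j+ℓ} (Set.Icc (j+1) (j+ℓ-1)) ≤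
        DgS σ K a {j, j+ℓ} (Set.Icc (j+1) (j+ℓ-1)) :=
      DgS_mono (j := j) hK h1int
        (by intro i hi; rcases hi with hi | hi <;>
          simp only [Set.mem_singleton_iff, Set.mem_insert_iff] at hi ⊢ <;> omega)
        (Or.inl rfl) (by intro i hi; simp only [Set.mem_Icc] at hi; omega)
        (Set.finite_Icc _ _)
    have h2 : DgS σ K a ({j, j+ℓ} : Set ℕ) (Set.Icc (j+1) (j+ℓ-1)) =
        DgS σ K a {0, ℓ} (Set.Icc 1 (ℓ-1)) := by
      rw [← DgS_shift hK j {0, ℓ} (Set.Icc 1 (ℓ-1)) {j, j+ℓ} (Set.Icc (j+1) (j+ℓ-1))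
        (by rw [image_addl_pair, Nat.add_zero])
        (by rw [image_addl_Icc, show j + (ℓ-1) = j+ℓ-1 from by omega])]
    exact h2 ▸ h1
  -- P-formulas
  have hPjl := P_formula hK h1int hld (j+ℓ) (by omega)
  have hPj := P_formula hK h1int hld j hj
  have hPl := P_formula hK h1int hld ℓ hℓ
  -- positivity
  have hPjpos : 0 < DgS σ K a {0, j} (Set.Icc 1 (j-1)) :=
    DgS_pos (j := 0) hK h1int (Or.inl rfl) (by intro i _; omega) (Set.finite_Icc _ _)
  have hPlpos : 0 < DgS σ K a {0, ℓ} (Set.Icc 1 (ℓ-1)) :=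
    DgS_pos (j := 0) hK h1int (Or.inl rfl) (by intro i _; omega) (Set.finite_Icc _ _)
  -- the squeeze
  set Pj := DgS σ K a {0, j} (Set.Icc 1 (j-1)) with hPjdef
  set Pl := DgS σ K a {0, ℓ} (Set.Icc 1 (ℓ-1)) with hPldef
  set T := DgS σ K a {0, j+ℓ} {j} with hTdef
  set Djl := DgS σ K a {0} {j+ℓ} with hDjldef
  set Dj := DgS σ K a {0} {j} with hDjdef
  set Dl := DgS σ K a {0} {ℓ} with hDldef
  have hPdec : DgS σ K a {0, j+ℓ} (Set.Icc 1 (j+ℓ-1)) ≤ Pj * Pl * T := by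
    rw [DgS_congr rfl hsplit, ht1, ht2]
    have := Nat.mul_le_mul (Nat.mul_le_mul hR hQ) (le_refl T)
    exact this
  have hchain1 : La ^ (j+ℓ) ≤ Pj * Pl * (T * Djl) := by
    calc La ^ (j+ℓ) = DgS σ K a {0, j+ℓ} (Set.Icc 1 (j+ℓ-1)) * Djl := hPjl.symm
      _ ≤ (Pj * Pl * T) * Djl := Nat.mul_le_mul_right _ hPdec
      _ = Pj * Pl * (T * Djl) := by ring
  have hchain2 : Pj * Pl * (T * Djl) ≤ La ^ (j+ℓ) := by
    calc Pj * Pl * (T * Djl) ≤ Pj * Pl * (Dj * Dl) := Nat.mul_le_mul_left _ hupper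
      _ = (Pj * Dj) * (Pl * Dl) := by ring
      _ = La ^ j * La ^ ℓ := by rw [hPj, hPl]
      _ = La ^ (j+ℓ) := (pow_add La j ℓ).symm
  have heq : Pj * Pl * (T * Djl) = Pj * Pl * (Dj * Dl) := by
    have h1 : Pj * Pl * (T * Djl) = La ^ (j+ℓ) := le_antisymm hchain2 hchain1
    have h2 : Pj * Pl * (Dj * Dl) = La ^ (j+ℓ) := by
      calc Pj * Pl * (Dj * Dl) = (Pj * Dj) * (Pl * Dl) := by ring
        _ = La ^ j * La ^ ℓ := by rw [hPj, hPl]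
        _ = La ^ (j+ℓ) := (pow_add La j ℓ).symm
    rw [h1, h2]
  exact Nat.eq_of_mul_eq_mul_left (Nat.mul_pos hPjpos hPlpos) heq

end main5

section main6
variable [Field U] {σ : U ≃+* U} {K : Subfield U} {n : ℕ} {a : Fin n → U} {La m : ℕ}

variable (hK : K.map σ.toRingHom = K)
  (h1int : ∀ x ∈ bS σ a 1, IsIntegral (fAdj K (bS σ a 0)) x)
include hK h1int

lemma D_rec (hld : ∀ k, DgS σ K a (Set.Iic k) {k + 1} = La)
    (hdub : ∀ k, 1 ≤ k → DgS σ K a {0, k} {1} ≤ m) {ℓ0 : ℕ} (hℓ0 : 1 ≤ ℓ0)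
    (hd0 : DgS σ K a {0, ℓ0} {1} = m) :
    ∀ k, ℓ0 ≤ k → m * DgS σ K a {0} {k+1} = La * DgS σ K a {0} {k} := by
  intro k hk
  have hT := T_identity hK h1int hld 1 k (le_refl 1) (by omega)
  rw [Nat.add_comm 1 k] at hT
  rw [d_eq_m hK h1int hld hdub hℓ0 hd0 (k+1) (by omega), La_eq hK h1int hld] at hT
  exact hT

lemma D_pow (hld : ∀ k, DgS σ K a (Set.Iic k) {k + 1} = La)
    (hdub : ∀ k, 1 ≤ k → DgS σ K a {0, k} {1} ≤ m) {ℓ0 : ℕ} (hℓ0 : 1 ≤ ℓ0)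
    (hd0 : DgS σ K a {0, ℓ0} {1} = m) :
    ∀ t, m ^ t * DgS σ K a {0} {ℓ0 + t} = La ^ t * DgS σ K a {0} {ℓ0} := by
  intro t
  induction t with
  | zero => simp
  | succ t ih =>
      have hrec := D_rec hK h1int hld hdub hℓ0 hd0 (ℓ0 + t) (by omega)
      calc m ^ (t+1) * DgS σ K a {0} {ℓ0 + (t+1)}
          = m ^ t * (m * DgS σ K a {0} {(ℓ0 + t) + 1}) := by ring_nf
        _ = m ^ t * (La * DgS σ K a {0} {ℓ0 + t}) := by rw [hrec]
        _ = La * (m ^ t * DgS σ K a {0} {ℓ0 + t}) := by ring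
        _ = La * (La ^ t * DgS σ K a {0} {ℓ0}) := by rw [ih]
        _ = La ^ (t+1) * DgS σ K a {0} {ℓ0} := by ring

lemma final_key (hld : ∀ k, DgS σ K a (Set.Iic k) {k + 1} = La)
    (hdub : ∀ k, 1 ≤ k → DgS σ K a {0, k} {1} ≤ m) {ℓ0 : ℕ} (hℓ0 : 1 ≤ ℓ0)
    (hd0 : DgS σ K a {0, ℓ0} {1} = m) :
    ∀ ℓ j, ℓ0 ≤ ℓ → ℓ0 ≤ j →
      DgS σ K a {0, ℓ0} (Set.Icc 1 (ℓ0 - 1)) * DgS σ K a {0, j+ℓ} {j} = m ^ ℓ0 := by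
  intro ℓ j hℓ hj
  obtain ⟨r, rfl⟩ : ∃ r, j = ℓ0 + r := ⟨j - ℓ0, by omega⟩
  obtain ⟨s, rfl⟩ : ∃ s, ℓ = ℓ0 + s := ⟨ℓ - ℓ0, by omega⟩
  have h1 : DgS σ K a {0, ℓ0} (Set.Icc 1 (ℓ0 - 1)) * DgS σ K a {0} {ℓ0} = La ^ ℓ0 :=
    P_formula hK h1int hld ℓ0 hℓ0
  have h2 := T_identity hK h1int hld (ℓ0 + r) (ℓ0 + s) (by omega) (by omega)
  have h3 := D_pow hK h1int hld hdub hℓ0 hd0 r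
  have h4 := D_pow hK h1int hld hdub hℓ0 hd0 s
  have h5 := D_pow hK h1int hld hdub hℓ0 hd0 (ℓ0 + r + s)
  rw [show ℓ0 + (ℓ0 + r + s) = (ℓ0 + r) + (ℓ0 + s) from by omega] at h5
  -- positivity
  have hbase : ∀ k : ℕ, 0 < DgS σ K a {0} {k} := by
    intro k
    exact DgS_pos (j := 0) hK h1int rfl
      (by intro i hi; simp only [Set.mem_singleton_iff] at hi; omega) (Set.finite_singleton _)
  have hmpos : 0 < m := by
    rw [← hd0]
    exact DgS_pos (j := 0) hK h1int (Or.inl rfl)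
      (by intro i hi; simp only [Set.mem_singleton_iff] at hi; omega) (Set.finite_singleton _)
  set P := DgS σ K a {0, ℓ0} (Set.Icc 1 (ℓ0 - 1)) with hP
  set T := DgS σ K a {0, (ℓ0+r)+(ℓ0+s)} {ℓ0+r} with hT
  set D0 := DgS σ K a {0} {ℓ0} with hD0
  set Dj := DgS σ K a {0} {ℓ0+r} with hDj
  set Dl := DgS σ K a {0} {ℓ0+s} with hDl
  set Djl := DgS σ K a {0} {(ℓ0+r)+(ℓ0+s)} with hDjl
  have hY : 0 < D0 * Djl * (m ^ r * m ^ s * m ^ (ℓ0+r+s)) :=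
    Nat.mul_pos (Nat.mul_pos (hbase _) (hbase _))
      (Nat.mul_pos (Nat.mul_pos (pow_pos hmpos _) (pow_pos hmpos _))
        (pow_pos hmpos _))
  refine Nat.eq_of_mul_eq_mul_right hY ?_
  calc (P * T) * (D0 * Djl * (m ^ r * m ^ s * m ^ (ℓ0+r+s)))
      = (P * D0) * ((T * Djl) * (m ^ r * (m ^ s * m ^ (ℓ0+r+s)))) := by ring
    _ = La ^ ℓ0 * ((Dj * Dl) * (m ^ r * (m ^ s * m ^ (ℓ0+r+s)))) := by rw [h1, h2]
    _ = La ^ ℓ0 * ((m ^ r * Dj) * ((m ^ s * Dl) * m ^ (ℓ0+r+s))) := by ring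
    _ = La ^ ℓ0 * ((La ^ r * D0) * ((La ^ s * D0) * m ^ (ℓ0+r+s))) := by rw [h3, h4]
    _ = (La ^ ℓ0 * La ^ r * La ^ s) * (D0 * D0) * m ^ (ℓ0+r+s) := by ring
    _ = La ^ (ℓ0+r+s) * (D0 * D0) * m ^ (ℓ0+r+s) := by rw [← pow_add, ← pow_add]
    _ = (La ^ (ℓ0+r+s) * D0) * D0 * m ^ (ℓ0+r+s) := by ring
    _ = ((m ^ (ℓ0+r+s)) * Djl) * D0 * m ^ (ℓ0+r+s) := by rw [h5]
    _ = (m ^ ℓ0 * m ^ r * m ^ s) * Djl * D0 * m ^ (ℓ0+r+s) := by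
        rw [← pow_add, ← pow_add]
    _ = m ^ ℓ0 * (D0 * Djl * (m ^ r * m ^ s * m ^ (ℓ0+r+s))) := by ring
end main6

lemma BuS_singleton [Field U] (σ : U ≃+* U) {n : ℕ} (a : Fin n → U) (i : ℕ) :
    BuS σ a {i} = bS σ a i := by
  simp [BuS]

lemma BuS_pair [Field U] (σ : U ≃+* U) {n : ℕ} (a : Fin n → U) (i j : ℕ) :
    BuS σ a {i, j} = bS σ a i ∪ bS σ a j := by
  simp [BuS]

/-- with `m = sup_{ℓ≥1} μ(σ(a)/K(a,σ^ℓ(a)))` attained first at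
`ℓ0`, and `C = μ((σ(a),…,σ^{ℓ0−1}(a))/K(a,σ^{ℓ0}(a)))`, one has
`C·μ(a/K(σ^{-j}(a),σ^ℓ(a))) = m^{ℓ0}` for all `ℓ, j ≥ ℓ0`. -/
theorem stmt4 [Field U] [IsAlgClosed U] (σ : U ≃+* U) (K : Subfield U)
    (hK : K.map σ.toRingHom = K) {n : ℕ} (a : Fin n → U)
    (ha : ∀ i, IsAlgebraic (fAdj K (Set.range a)) (σ (a i)))
    (La : ℕ) (hLa : ∀ᶠ k in atTop, ldSeq σ K (Set.range a) k = La)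
    (hmu : deg (fAdj K (Set.range a)) (⇑σ '' Set.range a) = La)
    (m : ℕ)
    (hm : IsGreatest {x : ℕ | ∃ ℓ : ℕ, 1 ≤ ℓ ∧
        x = deg (fAdj K (Set.range a ∪ ⇑(σ ^ ℓ) '' Set.range a)) (⇑σ '' Set.range a)} m)
    (ℓ0 : ℕ) (hℓ0 : 1 ≤ ℓ0)
    (hℓ0m : deg (fAdj K (Set.range a ∪ ⇑(σ ^ ℓ0) '' Set.range a)) (⇑σ '' Set.range a) = m)
    (hℓ0min : ∀ ℓ : ℕ, 1 ≤ ℓ →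
      deg (fAdj K (Set.range a ∪ ⇑(σ ^ ℓ) '' Set.range a)) (⇑σ '' Set.range a) = m → ℓ0 ≤ ℓ)
    (C : ℕ)
    (hC : C = deg (fAdj K (Set.range a ∪ ⇑(σ ^ ℓ0) '' Set.range a))
        (⋃ i ∈ Set.Icc 1 (ℓ0 - 1), ⇑(σ ^ i) '' Set.range a)) :
    ∀ ℓ j : ℕ, ℓ0 ≤ ℓ → ℓ0 ≤ j →
      C * deg (fAdj K (⇑(σ⁻¹ ^ j) '' Set.range a ∪ ⇑(σ ^ ℓ) '' Set.range a)) (Set.range a) =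
        m ^ ℓ0 := by
  intro ℓ j hℓ hj
  have hb1 : bS σ a 1 = ⇑σ '' Set.range a := by rw [bS, pow_one]
  have h1int : ∀ x ∈ bS σ a 1, IsIntegral (fAdj K (bS σ a 0)) x := by
    intro x hx
    rw [hb1] at hx
    obtain ⟨y, ⟨i, rfl⟩, rfl⟩ := hx
    rw [bS_zero]
    exact (ha i).isIntegral
  have hmu0 : DgS σ K a {0} {1} = La := by
    rw [DgS, BuS_singleton, BuS_singleton, bS_zero, hb1]
    exact hmu
  obtain ⟨N0, hN0⟩ := Filter.eventually_atTop.mp hLa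
  have hev : ∀ k, ∃ N, k ≤ N ∧ DgS σ K a (Set.Iic N) {N + 1} = La := by
    intro k
    refine ⟨max k N0, le_max_left _ _, ?_⟩
    have h := hN0 (max k N0) (le_max_right _ _)
    rw [ldSeq] at h
    rw [DgS, BuS_singleton]
    exact h
  have hld := ld_const hK h1int hmu0 hev
  have hpair : ∀ k, DgS σ K a {0, k} {1} =
      deg (fAdj K (Set.range a ∪ ⇑(σ ^ k) '' Set.range a)) (⇑σ '' Set.range a) := by
    intro k
    rw [DgS, BuS_pair, BuS_singleton, bS_zero, hb1]
    rfl
  have hdub : ∀ k, 1 ≤ k → DgS σ K a {0, k} {1} ≤ m := by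
    intro k hk
    rw [hpair k]
    exact hm.2 ⟨k, hk, rfl⟩
  have hd0 : DgS σ K a {0, ℓ0} {1} = m := by rw [hpair ℓ0]; exact hℓ0m
  have hCeq : C = DgS σ K a {0, ℓ0} (Set.Icc 1 (ℓ0 - 1)) := by
    rw [hC, DgS, BuS_pair, bS_zero]
    rfl
  have hgoal : deg (fAdj K (⇑(σ⁻¹ ^ j) '' Set.range a ∪ ⇑(σ ^ ℓ) '' Set.range a))
      (Set.range a) = DgS σ K a {0, j + ℓ} {j} := by
    have hfK := Kpow_map hK j
    have e1 : ⇑(σ ^ j) '' (⇑(σ⁻¹ ^ j) '' Set.range a) = Set.range a := by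
      rw [← Set.image_comp]
      have hcomp : ⇑(σ ^ j) ∘ ⇑(σ⁻¹ ^ j) = id := by
        funext x
        show (σ ^ j) ((σ⁻¹ ^ j) x) = x
        rw [inv_pow]
        exact RingEquiv.apply_symm_apply (σ ^ j) x
      rw [hcomp, Set.image_id]
    have e2 : ⇑(σ ^ j) '' (⇑(σ ^ ℓ) '' Set.range a) = bS σ a (j + ℓ) := bS_image σ a j ℓ
    rw [← deg_map ((σ ^ j : U ≃+* U) : U →+* U) (fAdj K _) (Set.range a), fAdj_map, hfK,
      show ⇑((σ ^ j : U ≃+* U) : U →+* U) = ⇑(σ ^ j) from rfl, Set.image_union, e1, e2,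
      DgS, BuS_pair, BuS_singleton, bS_zero]
    rfl
  rw [hCeq, hgoal]
  exact final_key hK h1int hld hdub hℓ0 hd0 ℓ j hℓ hj
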